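/- Let π ∈ S_d, and let τ = (j, j+1) with π(j) ≠ j+1 and π(j+1) ≠ j, and suppose neither j nor j+1 is a fixed point of π. Define π'' on {1,...,d}∖{j} by π''(j+1) = π(j), π''(k) = π(j+1) if π(k) = j, and π''(k) = π(k) otherwise. Then aex(π'') ≤ aex(π). -/

import Mathlib

/-- The number of antiexceedances of a permutation: indices `i` with `π i ≤ i`. -/
def aex {d : ℕ} (π : Equiv.Perm (Fin d)) : ℕ :=
  (Finset.univ.filter (fun i => π i ≤ i)).card

/-- Given `π ∈ S_d` and `j` with `π(j) ≠ j+1`, `π(j+1) ≠ j`, and neither `j`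
nor `j+1` a fixed point, the permutation `π''` of `{1,…,d}∖{j}` defined by
`π''(j+1) = π(j)`, `π''(k) = π(j+1)` when `π(k) = j`, and `π''(k) = π(k)`
otherwise, has at most as many antiexceedances as `π`. -/
theorem aex_pi''_le (d : ℕ) (π : Equiv.Perm (Fin d)) (j j1 : Fin d)
    (hj1 : (j1 : ℕ) = (j : ℕ) + 1)
    (hnice : π j ≠ j1) (h4 : π j1 ≠ j) (hfj : π j ≠ j) (hfj1 : π j1 ≠ j1) :
    ((Finset.univ.erase j).filter
        (fun k => (if k = j1 then π j else if π k = j then π j1 else π k) ≤ k)).card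
      ≤ aex π := by
  classical
  set k0 := π.symm j with hk0def
  have hπk0 : π k0 = j := π.apply_symm_apply j
  have hk0j : k0 ≠ j := fun h => hfj (h ▸ hπk0)
  have hk0j1 : k0 ≠ j1 := fun h => h4 (h ▸ hπk0)
  have hjlt : (j : ℕ) < (j1 : ℕ) := by omega
  have hjj1 : j ≠ j1 := fun h => by rw [h] at hjlt; omega
  set g : Fin d → Fin d := fun k =>
    if k = j1 then j else if k = k0 then (if (j:ℕ) ≤ (k0:ℕ) then k0 else j1) else k
    with hg
  apply Finset.card_le_card_of_injOn g
  · intro k hk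
    simp only [Finset.mem_coe, Finset.mem_filter, Finset.mem_erase, Finset.mem_univ, true_and] at hk
    obtain ⟨hkj, hkle⟩ := hk
    simp only [aex, Finset.mem_coe, Finset.mem_filter, Finset.mem_univ, true_and]
    simp only [hg]
    by_cases h1 : k = j1
    · rw [if_pos h1]
      rw [if_pos h1] at hkle
      have hle : (π j : ℕ) ≤ (j1 : ℕ) := by rw [← h1]; exact Fin.le_def.mp hkle
      have hne : (π j : ℕ) ≠ (j1 : ℕ) := fun h => hnice (Fin.ext h)
      have hne2 : (π j : ℕ) ≠ (j : ℕ) := fun h => hfj (Fin.ext h)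
      exact Fin.le_def.mpr (by omega)
    · rw [if_neg h1]
      rw [if_neg h1] at hkle
      by_cases h2 : k = k0
      · rw [if_pos h2]
        rw [if_pos (by rw [h2]; exact hπk0)] at hkle
        by_cases h3 : (j:ℕ) ≤ (k0:ℕ)
        · rw [if_pos h3, hπk0]; exact Fin.le_def.mpr h3
        · rw [if_neg h3]
          have h5 : (π j1 : ℕ) ≤ (k : ℕ) := Fin.le_def.mp hkle
          have h6 : (k : ℕ) = (k0 : ℕ) := by rw [h2]
          exact Fin.le_def.mpr (by omega)
      · rw [if_neg h2]
        rwa [if_neg (fun h => h2 (by rw [hk0def, ← h, Equiv.symm_apply_apply]))] at hkle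
  · intro a ha b hb hab
    simp only [Finset.coe_filter, Finset.mem_erase, Finset.mem_univ, true_and,
      Set.mem_setOf_eq] at ha hb
    have haj : a ≠ j := ha.1.1
    have hbj : b ≠ j := hb.1.1
    simp only [hg] at hab
    by_cases ha1 : a = j1 <;> by_cases hb1 : b = j1
    · rw [ha1, hb1]
    · rw [if_pos ha1, if_neg hb1] at hab
      by_cases hb2 : b = k0
      · rw [if_pos hb2] at hab
        by_cases h3 : (j:ℕ) ≤ (k0:ℕ)
        · rw [if_pos h3] at hab; exact absurd hab.symm hk0j
        · rw [if_neg h3] at hab; exact absurd hab.symm (fun h => hjj1 h.symm)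
      · rw [if_neg hb2] at hab; exact absurd hab.symm hbj
    · rw [if_neg ha1, if_pos hb1] at hab
      by_cases ha2 : a = k0
      · rw [if_pos ha2] at hab
        by_cases h3 : (j:ℕ) ≤ (k0:ℕ)
        · rw [if_pos h3] at hab; exact absurd hab hk0j
        · rw [if_neg h3] at hab; exact absurd hab (fun h => hjj1 h.symm)
      · rw [if_neg ha2] at hab; exact absurd hab haj
    · rw [if_neg ha1, if_neg hb1] at hab
      by_cases ha2 : a = k0 <;> by_cases hb2 : b = k0
      · rw [ha2, hb2]
      · rw [if_pos ha2, if_neg hb2] at hab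
        by_cases h3 : (j:ℕ) ≤ (k0:ℕ)
        · rw [if_pos h3] at hab; exact absurd hab.symm hb2
        · rw [if_neg h3] at hab; exact absurd hab.symm hb1
      · rw [if_neg ha2, if_pos hb2] at hab
        by_cases h3 : (j:ℕ) ≤ (k0:ℕ)
        · rw [if_pos h3] at hab; exact absurd hab ha2
        · rw [if_neg h3] at hab; exact absurd hab ha1
      · rwa [if_neg ha2, if_neg hb2] at hab
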